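/- Let h : (0,∞) → ℝ be measurable and bounded with ∫₀^∞ h(y)²/y dy < ∞, fix t > 0, and let φ(x,t) = ∫₀^∞ exp(−x·y − 2t/y)·h(y)² dy. Then for every x₀ > 0 the integral ∫₀^∞ x·φ(x + 2x₀, t)² dx is finite, and it tends to 0 as x₀ → ∞. -/

import Mathlib

open MeasureTheory

/-- The scattering function `φ(x,t) = ∫₀^∞ exp(−xy − 2t/y)·h(y)² dy` of the linear
system associated with the Howland kernel. -/
noncomputable def phiSG (h : ℝ → ℝ) (x t : ℝ) : ℝ :=
  ∫ y in Set.Ioi (0 : ℝ), Real.exp (-(x * y) - 2 * t / y) * (h y) ^ 2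

lemma aux_exp_le (z : ℝ) (hz : 0 < z) : Real.exp (-z) ≤ 256 / z ^ 4 := by
  have h1 : z / 4 ≤ Real.exp (z / 4) := by linarith [Real.add_one_le_exp (z / 4)]
  have h2 : (z / 4) ^ 4 ≤ (Real.exp (z / 4)) ^ 4 := pow_le_pow_left₀ (by positivity) h1 4
  have h3 : (Real.exp (z / 4)) ^ 4 = Real.exp z := by
    rw [← Real.exp_nat_mul]; congr 1; push_cast; ring
  have h4 : (z / 4) ^ 4 ≤ Real.exp z := h3 ▸ h2
  rw [Real.exp_neg]
  have h5 : (Real.exp z)⁻¹ ≤ ((z / 4) ^ 4)⁻¹ := inv_anti₀ (by positivity) h4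
  refine h5.trans_eq ?_
  field_simp
  ring

lemma aux_int_exp_sqrt {c : ℝ} (hc : 0 < c) :
    IntegrableOn (fun x : ℝ => Real.exp (-Real.sqrt (c * x))) (Set.Ioi 0) := by
  have hcont : Continuous fun x : ℝ => Real.exp (-Real.sqrt (c * x)) :=
    Real.continuous_exp.comp (Real.continuous_sqrt.comp (continuous_const.mul continuous_id)).neg
  have hle1 : ∀ x : ℝ, Real.exp (-Real.sqrt (c * x)) ≤ 1 := by
    intro x
    calc Real.exp (-Real.sqrt (c * x)) ≤ Real.exp 0 :=
          Real.exp_le_exp.mpr (neg_nonpos.mpr (Real.sqrt_nonneg _))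
      _ = 1 := Real.exp_zero
  rw [← Set.Ioc_union_Ioi_eq_Ioi (zero_le_one : (0:ℝ) ≤ 1)]
  refine IntegrableOn.union ?_ ?_
  · refine Integrable.mono'
      (integrableOn_const_iff (C := (1:ℝ)) |>.mpr (Or.inr measure_Ioc_lt_top))
      hcont.aestronglyMeasurable (Filter.Eventually.of_forall fun x => ?_)
    rw [Real.norm_eq_abs, abs_of_pos (Real.exp_pos _)]
    exact hle1 x
  · have hdom : IntegrableOn (fun x : ℝ => 256 / c ^ 2 * x ^ (-2 : ℝ)) (Set.Ioi 1) :=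
      (integrableOn_Ioi_rpow_of_lt (by norm_num : (-2:ℝ) < -1) one_pos).const_mul _
    refine Integrable.mono' hdom hcont.aestronglyMeasurable ?_
    filter_upwards [ae_restrict_mem measurableSet_Ioi] with x hx
    have hx1 : (1:ℝ) < x := hx
    have hx0 : (0:ℝ) < x := lt_trans one_pos hx1
    have hcx : 0 < c * x := mul_pos hc hx0
    have hz : 0 < Real.sqrt (c * x) := Real.sqrt_pos.mpr hcx
    have hz4 : Real.sqrt (c * x) ^ 4 = (c * x) ^ 2 := by
      rw [show (4:ℕ) = 2 * 2 by norm_num, pow_mul, Real.sq_sqrt hcx.le]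
    rw [Real.norm_eq_abs, abs_of_pos (Real.exp_pos _)]
    have := aux_exp_le _ hz
    rw [hz4] at this
    refine this.trans_eq ?_
    rw [Real.rpow_neg hx0.le, show (2:ℝ) = ((2:ℕ):ℝ) by norm_num, Real.rpow_natCast]
    field_simp

/-- For bounded measurable `h : (0,∞) → ℝ` with `∫₀^∞ h(y)²/y dy < ∞` and fixed `t > 0`,
the squared Hilbert–Schmidt norm `∫₀^∞ x·φ(x+2x₀,t)² dx` of the shifted Hankel operator
is finite for every `x₀ > 0`, and tends to `0` as `x₀ → ∞`. -/
theorem shifted_hankel_hilbert_schmidt_norm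
    (h : ℝ → ℝ) (hmeas : Measurable h) (hbdd : ∃ K : ℝ, ∀ y : ℝ, 0 < y → |h y| ≤ K)
    (hint : IntegrableOn (fun y : ℝ => (h y) ^ 2 / y) (Set.Ioi (0 : ℝ)))
    (t : ℝ) (ht : 0 < t) :
    (∀ x₀ : ℝ, 0 < x₀ →
      IntegrableOn (fun x : ℝ => x * (phiSG h (x + 2 * x₀) t) ^ 2) (Set.Ioi (0 : ℝ))) ∧
    Filter.Tendsto
      (fun x₀ : ℝ => ∫ x in Set.Ioi (0 : ℝ), x * (phiSG h (x + 2 * x₀) t) ^ 2)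
      Filter.atTop (nhds 0) := by
  clear hbdd
  set A : ℝ := ∫ y in Set.Ioi (0:ℝ), (h y) ^ 2 / y with hA
  have hA0 : 0 ≤ A :=
    setIntegral_nonneg measurableSet_Ioi fun y hy => div_nonneg (sq_nonneg _) (le_of_lt hy)
  have h2t : (0:ℝ) < 2 * t := by linarith
  -- measurability of φ in x
  have hFmeas : Measurable fun p : ℝ × ℝ => Real.exp (-(p.1 * p.2) - 2 * t / p.2) * (h p.2) ^ 2 :=
    (Real.measurable_exp.comp
      (((measurable_fst.mul measurable_snd).neg).sub (measurable_const.div measurable_snd))).mul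
      ((hmeas.comp measurable_snd).pow_const 2)
  have hphi_meas : StronglyMeasurable fun x : ℝ => phiSG h x t :=
    StronglyMeasurable.integral_prod_right' (f := fun p : ℝ × ℝ =>
      Real.exp (-(p.1 * p.2) - 2 * t / p.2) * (h p.2) ^ 2) hFmeas.stronglyMeasurable
  -- pointwise bound of the integrand of φ
  have key : ∀ x : ℝ, 0 < x → ∀ y ∈ Set.Ioi (0:ℝ),
      Real.exp (-(x * y) - 2 * t / y) * (h y) ^ 2 ≤
        Real.exp (-Real.sqrt (2 * t * x)) * (2 / x) * ((h y) ^ 2 / y) := by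
    intro x hx y hy
    have hy : (0:ℝ) < y := hy
    have hxy : (0:ℝ) ≤ x * y / 2 := by positivity
    have hty : (0:ℝ) ≤ t / y := by positivity
    have ha2 : Real.sqrt (x * y / 2) ^ 2 = x * y / 2 := Real.sq_sqrt hxy
    have hb2 : Real.sqrt (t / y) ^ 2 = t / y := Real.sq_sqrt hty
    have h2ab : 2 * Real.sqrt (x * y / 2) * Real.sqrt (t / y) ≤
        Real.sqrt (x * y / 2) ^ 2 + Real.sqrt (t / y) ^ 2 := two_mul_le_add_sq _ _
    have hab : Real.sqrt (x * y / 2) * Real.sqrt (t / y) = Real.sqrt (x * t / 2) := by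
      rw [← Real.sqrt_mul hxy]
      congr 1
      field_simp
    have h2s : Real.sqrt (2 * t * x) = 2 * Real.sqrt (x * t / 2) := by
      rw [show 2 * t * x = 2 ^ 2 * (x * t / 2) by ring, Real.sqrt_mul (by positivity),
        Real.sqrt_sq (by norm_num : (0:ℝ) ≤ 2)]
    have hsum : Real.sqrt (2 * t * x) ≤ x * y / 2 + t / y := by
      rw [h2s, ← hab]
      nlinarith [h2ab, ha2, hb2]
    have hexp : Real.exp (-(x * y) - 2 * t / y) ≤
        Real.exp (-Real.sqrt (2 * t * x)) * Real.exp (-(x * y / 2)) := by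
      rw [← Real.exp_add]
      apply Real.exp_le_exp.mpr
      have h2ty : 2 * t / y = t / y + t / y := by ring
      linarith [hsum, hty, h2ty]
    have hxyp : 0 < x * y := mul_pos hx hy
    have hexp2 : Real.exp (-(x * y / 2)) ≤ 2 / (x * y) := by
      have h3 : x * y / 2 ≤ Real.exp (x * y / 2) := by
        linarith [Real.add_one_le_exp (x * y / 2)]
      have h4 : (Real.exp (x * y / 2))⁻¹ ≤ (x * y / 2)⁻¹ :=
        inv_anti₀ (by positivity) h3
      rw [Real.exp_neg]
      refine h4.trans_eq ?_
      field_simp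
    calc Real.exp (-(x * y) - 2 * t / y) * (h y) ^ 2
        ≤ (Real.exp (-Real.sqrt (2 * t * x)) * Real.exp (-(x * y / 2))) * (h y) ^ 2 :=
          mul_le_mul_of_nonneg_right hexp (sq_nonneg _)
      _ ≤ (Real.exp (-Real.sqrt (2 * t * x)) * (2 / (x * y))) * (h y) ^ 2 :=
          mul_le_mul_of_nonneg_right
            (mul_le_mul_of_nonneg_left hexp2 (Real.exp_pos _).le) (sq_nonneg _)
      _ = Real.exp (-Real.sqrt (2 * t * x)) * (2 / x) * ((h y) ^ 2 / y) := by
          field_simp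
  have phi_nonneg : ∀ x : ℝ, 0 ≤ phiSG h x t := fun x =>
    setIntegral_nonneg measurableSet_Ioi fun y _ =>
      mul_nonneg (Real.exp_pos _).le (sq_nonneg _)
  -- integrability of the integrand of φ for x > 0
  have phi_int : ∀ x : ℝ, 0 < x →
      IntegrableOn (fun y : ℝ => Real.exp (-(x * y) - 2 * t / y) * (h y) ^ 2)
        (Set.Ioi (0:ℝ)) := by
    intro x hx
    refine Integrable.mono' (hint.const_mul (Real.exp (-Real.sqrt (2 * t * x)) * (2 / x)))
      ((((Real.measurable_exp.comp ((measurable_const_mul x).neg.sub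
        (measurable_const.div measurable_id))).mul
        (hmeas.pow_const 2))).aestronglyMeasurable) ?_
    filter_upwards [ae_restrict_mem measurableSet_Ioi] with y hy
    rw [Real.norm_eq_abs, abs_of_nonneg (mul_nonneg (Real.exp_pos _).le (sq_nonneg _))]
    exact key x hx y hy
  -- bound on φ
  have phi_le : ∀ x : ℝ, 0 < x →
      phiSG h x t ≤ Real.exp (-Real.sqrt (2 * t * x)) * (2 / x) * A := by
    intro x hx
    calc phiSG h x t
        ≤ ∫ y in Set.Ioi (0:ℝ),
            Real.exp (-Real.sqrt (2 * t * x)) * (2 / x) * ((h y) ^ 2 / y) :=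
          setIntegral_mono_on (phi_int x hx)
            (hint.const_mul (Real.exp (-Real.sqrt (2 * t * x)) * (2 / x)))
            measurableSet_Ioi (key x hx)
      _ = Real.exp (-Real.sqrt (2 * t * x)) * (2 / x) * A := by
          rw [MeasureTheory.integral_const_mul]
  -- the main pointwise bound
  have main_bd : ∀ x₀ : ℝ, 0 < x₀ → ∀ x ∈ Set.Ioi (0:ℝ),
      x * (phiSG h (x + 2 * x₀) t) ^ 2 ≤
        A ^ 2 / (2 * x₀) * Real.exp (-Real.sqrt (4 * t * x₀)) *
          Real.exp (-Real.sqrt (2 * t * x)) := by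
    intro x₀ hx₀ x hx
    have hx : (0:ℝ) < x := hx
    set X : ℝ := x + 2 * x₀ with hX
    have hXpos : 0 < X := by positivity
    have h1 : phiSG h X t ≤ Real.exp (-Real.sqrt (2 * t * X)) * (2 / X) * A :=
      phi_le X hXpos
    have hsq : (phiSG h X t) ^ 2 ≤
        (Real.exp (-Real.sqrt (2 * t * X)) * (2 / X) * A) ^ 2 :=
      pow_le_pow_left₀ (phi_nonneg X) h1 2
    have hE : Real.exp (-Real.sqrt (2 * t * X)) ^ 2 ≤
        Real.exp (-Real.sqrt (4 * t * x₀)) * Real.exp (-Real.sqrt (2 * t * x)) := by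
      rw [← Real.exp_nat_mul, ← Real.exp_add]
      apply Real.exp_le_exp.mpr
      have e1 : Real.sqrt (4 * t * x₀) ≤ Real.sqrt (2 * t * X) :=
        Real.sqrt_le_sqrt (by rw [hX]; nlinarith)
      have e2 : Real.sqrt (2 * t * x) ≤ Real.sqrt (2 * t * X) :=
        Real.sqrt_le_sqrt (by rw [hX]; nlinarith)
      push_cast
      linarith
    have hXsq : x * (2 / X) ^ 2 ≤ 1 / (2 * x₀) := by
      rw [div_pow, show x * (2 ^ 2 / X ^ 2) = 4 * x / X ^ 2 by ring,
        div_le_div_iff₀ (by positivity) (by positivity)]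
      nlinarith [sq_nonneg (x - 2 * x₀)]
    calc x * (phiSG h X t) ^ 2
        ≤ x * (Real.exp (-Real.sqrt (2 * t * X)) * (2 / X) * A) ^ 2 :=
          mul_le_mul_of_nonneg_left hsq hx.le
      _ = (Real.exp (-Real.sqrt (2 * t * X)) ^ 2) * (x * (2 / X) ^ 2) * A ^ 2 := by
          ring
      _ ≤ (Real.exp (-Real.sqrt (4 * t * x₀)) * Real.exp (-Real.sqrt (2 * t * x))) *
            (1 / (2 * x₀)) * A ^ 2 := by
          apply mul_le_mul_of_nonneg_right _ (sq_nonneg A)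
          apply mul_le_mul hE hXsq (by positivity)
            (by positivity)
      _ = A ^ 2 / (2 * x₀) * Real.exp (-Real.sqrt (4 * t * x₀)) *
            Real.exp (-Real.sqrt (2 * t * x)) := by ring
  -- measurability of the main integrand
  have meas_main : ∀ x₀ : ℝ,
      Measurable fun x : ℝ => x * (phiSG h (x + 2 * x₀) t) ^ 2 := fun x₀ =>
    measurable_id.mul
      (((hphi_meas.measurable.comp (measurable_id.add_const (2 * x₀))).pow_const 2))
  -- integrability
  have hIntOn : ∀ x₀ : ℝ, 0 < x₀ →
      IntegrableOn (fun x : ℝ => x * (phiSG h (x + 2 * x₀) t) ^ 2) (Set.Ioi (0:ℝ)) := by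
    intro x₀ hx₀
    refine Integrable.mono'
      ((aux_int_exp_sqrt h2t).const_mul
        (A ^ 2 / (2 * x₀) * Real.exp (-Real.sqrt (4 * t * x₀))))
      (meas_main x₀).aestronglyMeasurable ?_
    filter_upwards [ae_restrict_mem measurableSet_Ioi] with x hx
    rw [Real.norm_eq_abs,
      abs_of_nonneg (mul_nonneg (le_of_lt hx) (sq_nonneg _))]
    exact main_bd x₀ hx₀ x hx
  refine ⟨hIntOn, ?_⟩
  -- the limit
  set J : ℝ := ∫ x in Set.Ioi (0:ℝ), Real.exp (-Real.sqrt (2 * t * x)) with hJ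
  have hJnn : 0 ≤ J :=
    setIntegral_nonneg measurableSet_Ioi fun x _ => (Real.exp_pos _).le
  have hup : ∀ x₀ : ℝ, 0 < x₀ →
      (∫ x in Set.Ioi (0:ℝ), x * (phiSG h (x + 2 * x₀) t) ^ 2) ≤
        (A ^ 2 * J / 2) * x₀⁻¹ := by
    intro x₀ hx₀
    have hEle1 : Real.exp (-Real.sqrt (4 * t * x₀)) ≤ 1 := by
      calc Real.exp (-Real.sqrt (4 * t * x₀)) ≤ Real.exp 0 :=
            Real.exp_le_exp.mpr (neg_nonpos.mpr (Real.sqrt_nonneg _))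
        _ = 1 := Real.exp_zero
    calc (∫ x in Set.Ioi (0:ℝ), x * (phiSG h (x + 2 * x₀) t) ^ 2)
        ≤ ∫ x in Set.Ioi (0:ℝ),
            A ^ 2 / (2 * x₀) * Real.exp (-Real.sqrt (4 * t * x₀)) *
              Real.exp (-Real.sqrt (2 * t * x)) :=
          setIntegral_mono_on (hIntOn x₀ hx₀)
            ((aux_int_exp_sqrt h2t).const_mul _) measurableSet_Ioi (main_bd x₀ hx₀)
      _ = A ^ 2 / (2 * x₀) * Real.exp (-Real.sqrt (4 * t * x₀)) * J := by
          rw [MeasureTheory.integral_const_mul]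
      _ ≤ A ^ 2 / (2 * x₀) * 1 * J := by
          apply mul_le_mul_of_nonneg_right _ hJnn
          exact mul_le_mul_of_nonneg_left hEle1 (by positivity)
      _ = (A ^ 2 * J / 2) * x₀⁻¹ := by
          field_simp
  have hlow : ∀ x₀ : ℝ, 0 ≤ ∫ x in Set.Ioi (0:ℝ), x * (phiSG h (x + 2 * x₀) t) ^ 2 :=
    fun x₀ => setIntegral_nonneg measurableSet_Ioi fun x hx =>
      mul_nonneg (le_of_lt hx) (sq_nonneg _)
  have htend : Filter.Tendsto (fun x₀ : ℝ => (A ^ 2 * J / 2) * x₀⁻¹)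
      Filter.atTop (nhds 0) := by
    have := tendsto_inv_atTop_zero.const_mul (A ^ 2 * J / 2)
    rwa [mul_zero] at this
  refine tendsto_of_tendsto_of_tendsto_of_le_of_le' tendsto_const_nhds htend
    (Filter.Eventually.of_forall hlow) ?_
  filter_upwards [Filter.eventually_gt_atTop (0:ℝ)] with x₀ hx₀
  exact hup x₀ hx₀
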